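/- Let τ > 0, δ ∈ [0,1), ε ≥ 0, and let the positive similarity satisfy 1 − ε ≤ s_pos ≤ 1. Suppose the negatives include a set S of cardinality K ≥ 1 with similarity at least 1 − δ each. Then the NT-Xent loss ℓ = -log( exp(s_pos/τ) / ( exp(s_pos/τ) + Σ_k exp(s k / τ) ) ) satisfies ℓ ≥ log(1 + K · exp((1 − δ − s_pos)/τ)) ≥ log(1 + K · exp(−δ/τ)); i.e., the invariance lower bound persists under approximate (rather than perfect) positive alignment. -/

import Mathlib

/-- **NT-Xent invariance lower bound under approximate positive alignment.**
Let `τ > 0`, `δ ∈ [0,1)`, `ε ≥ 0`, and let the positive similarity satisfy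
`1 − ε ≤ s_pos ≤ 1`. Suppose the negatives include a set `S` of cardinality
`K ≥ 1` with similarity at least `1 − δ` each. Then the NT-Xent loss
`ℓ = -log (exp(s_pos/τ) / (exp(s_pos/τ) + Σ_k exp(s k / τ)))` satisfies
`ℓ ≥ log (1 + K · exp((1 − δ − s_pos)/τ)) ≥ log (1 + K · exp(−δ/τ))`;
i.e., the invariance lower bound persists under approximate (rather than
perfect) positive alignment. -/
theorem ntxent_lower_bound_approximate_alignment
    (τ : ℝ) (hτ : 0 < τ) (δ : ℝ) (hδ0 : 0 ≤ δ) (hδ1 : δ < 1)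
    (ε : ℝ) (hε : 0 ≤ ε) (spos : ℝ) (hspos₁ : 1 - ε ≤ spos) (hspos₂ : spos ≤ 1)
    (n : ℕ) (s : Fin n → ℝ)
    (S : Finset (Fin n)) (K : ℕ) (hKcard : S.card = K) (hK : 1 ≤ K)
    (hS : ∀ k ∈ S, 1 - δ ≤ s k) :
    -Real.log (Real.exp (spos / τ) /
        (Real.exp (spos / τ) + ∑ k, Real.exp (s k / τ)))
      ≥ Real.log (1 + (K : ℝ) * Real.exp ((1 - δ - spos) / τ))
    ∧ Real.log (1 + (K : ℝ) * Real.exp ((1 - δ - spos) / τ))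
      ≥ Real.log (1 + (K : ℝ) * Real.exp (-δ / τ)) := by

  have hE : (0:ℝ) < Real.exp (spos / τ) := Real.exp_pos _
  set E := Real.exp (spos / τ) with hEdef
  set T := ∑ k, Real.exp (s k / τ) with hTdef
  have hT0 : 0 ≤ T := Finset.sum_nonneg fun k _ => (Real.exp_pos _).le
  have hTS : (K : ℝ) * Real.exp ((1 - δ) / τ) ≤ T := by
    calc (K : ℝ) * Real.exp ((1 - δ) / τ)
        = ∑ k ∈ S, Real.exp ((1 - δ) / τ) := by
          rw [Finset.sum_const, hKcard, nsmul_eq_mul]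
      _ ≤ ∑ k ∈ S, Real.exp (s k / τ) := by
          apply Finset.sum_le_sum
          intro k hk
          exact Real.exp_le_exp.2 (by gcongr; exact hS k hk)
      _ ≤ T := Finset.sum_le_sum_of_subset_of_nonneg (Finset.subset_univ S)
          (fun k _ _ => (Real.exp_pos _).le)
  have key : (K : ℝ) * Real.exp ((1 - δ - spos) / τ) ≤ T / E := by
    rw [le_div_iff₀ hE]
    calc (K : ℝ) * Real.exp ((1 - δ - spos) / τ) * E
        = (K : ℝ) * Real.exp ((1 - δ) / τ) := by
          rw [hEdef, mul_assoc, ← Real.exp_add]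
          congr 2
          field_simp
          ring
      _ ≤ T := hTS
  constructor
  · have : -Real.log (E / (E + T)) = Real.log (1 + T / E) := by
      rw [← Real.log_inv, inv_div]
      congr 1
      field_simp
    rw [this]
    apply Real.log_le_log (by positivity)
    linarith
  · apply Real.log_le_log (by positivity)
    have : Real.exp (-δ / τ) ≤ Real.exp ((1 - δ - spos) / τ) := by
      apply Real.exp_le_exp.2
      gcongr
      linarith
    have hK' : (0:ℝ) ≤ K := Nat.cast_nonneg K
    nlinarith
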